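/- Let N ≥ 1 be an integer, let p > 2 and q ∈ (1,2), and set q* := p/(p−q). Let f : ℝ^N → ℝ be a bounded measurable function with ∫_{ℝ^N} |f|^{q*} dx < ∞. Let (u_n) be a sequence of measurable functions and u a measurable function on ℝ^N such that sup_n ‖u_n‖_{L^p(ℝ^N)} < ∞, ‖u‖_{L^p(ℝ^N)} < ∞, and for every R > 0, ∫_{B_R(0)} |u_n − u|² dx → 0 as n → ∞. Then ∫_{ℝ^N} f |u_n|^q dx → ∫_{ℝ^N} f |u|^q dx as n → ∞. -/

import Mathlib

open MeasureTheory Set Filter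
open scoped ENNReal NNReal Topology

lemma my_rpow_sub_rpow_le {q : ℝ} (hq : 1 ≤ q) {x y : ℝ} (hy : 0 ≤ y) (hxy : y ≤ x) :
    x ^ q - y ^ q ≤ q * x ^ (q - 1) * (x - y) := by
  rcases eq_or_lt_of_le hxy with rfl | h
  · simp
  · obtain ⟨c, hc, hc'⟩ := exists_hasDerivAt_eq_slope (fun t => t ^ q)
      (fun t => q * t ^ (q - 1)) h
      (fun t _ => (Real.continuousAt_rpow_const t q (Or.inr (by linarith))).continuousWithinAt)
      (fun t _ => Real.hasDerivAt_rpow_const (Or.inr hq))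
    have hc0 : (0:ℝ) ≤ c := le_trans hy hc.1.le
    have hcx : c ^ (q - 1) ≤ x ^ (q - 1) := Real.rpow_le_rpow hc0 hc.2.le (by linarith)
    have hq0 : (0:ℝ) ≤ q := by linarith
    have hc2 : q * c ^ (q - 1) = (x ^ q - y ^ q) / (x - y) := hc'
    rw [eq_div_iff (sub_ne_zero.2 h.ne')] at hc2
    rw [← hc2]
    have := mul_le_mul_of_nonneg_left hcx hq0
    nlinarith [sub_pos.2 h]

lemma my_abs_rpow_sub_abs_rpow {q : ℝ} (hq : 1 ≤ q) (a b : ℝ) :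
    |(|a|) ^ q - (|b|) ^ q| ≤ q * ((|a| ^ (q - 1) + |b| ^ (q - 1)) * |a - b|) := by
  wlog hab : |b| ≤ |a| with H
  · have := H hq b a (le_of_not_ge hab)
    calc |(|a|) ^ q - (|b|) ^ q| = |(|b|) ^ q - (|a|) ^ q| := abs_sub_comm _ _
      _ ≤ q * ((|b| ^ (q - 1) + |a| ^ (q - 1)) * |b - a|) := this
      _ = q * ((|a| ^ (q - 1) + |b| ^ (q - 1)) * |a - b|) := by rw [abs_sub_comm, add_comm]
  · have h1 : |b| ^ q ≤ |a| ^ q := Real.rpow_le_rpow (abs_nonneg b) hab (by linarith)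
    rw [abs_of_nonneg (sub_nonneg.2 h1)]
    have h2 : |a| - |b| ≤ |a - b| := abs_sub_abs_le_abs_sub a b
    have h3 : (0:ℝ) ≤ |a| ^ (q - 1) := Real.rpow_nonneg (abs_nonneg a) _
    have h4 : (0:ℝ) ≤ |b| ^ (q - 1) := Real.rpow_nonneg (abs_nonneg b) _
    calc |a| ^ q - |b| ^ q ≤ q * |a| ^ (q - 1) * (|a| - |b|) :=
          my_rpow_sub_rpow_le hq (abs_nonneg b) hab
      _ ≤ q * ((|a| ^ (q - 1) + |b| ^ (q - 1)) * |a - b|) := by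
          have hq0 : (0:ℝ) ≤ q := le_trans zero_le_one hq
          rw [mul_assoc]
          refine mul_le_mul_of_nonneg_left ?_ hq0
          exact mul_le_mul (le_add_of_nonneg_right h4) h2
            (sub_nonneg.2 hab) (by positivity)

lemma my_weighted_holder {α : Type*} [MeasurableSpace α] (μ : Measure α) {p q : ℝ}
    (hp : 2 < p) (hq1 : 1 < q) (hq2 : q < 2)
    {F V : α → ℝ≥0∞} (hF : Measurable F) (hV : Measurable V) :
    ∫⁻ x, F x * V x ^ q ∂μ ≤
      (∫⁻ x, F x ^ (p / (p - q)) ∂μ) ^ ((p - q) / p) * (∫⁻ x, V x ^ p ∂μ) ^ (q / p) := by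
  have hpq : 0 < p - q := by linarith
  have conj : Real.HolderConjugate (p / (p - q)) (p / q) := by
    rw [Real.holderConjugate_iff]; constructor
    · rw [lt_div_iff₀ hpq]; linarith
    · rw [inv_div, inv_div]; field_simp; ring
  have h := ENNReal.lintegral_mul_le_Lp_mul_Lq μ conj hF.aemeasurable
    ((ENNReal.continuous_rpow_const.measurable.comp hV).aemeasurable (μ := μ) (f := fun x => V x ^ q))
  simp only [Pi.mul_apply] at h
  calc ∫⁻ x, F x * V x ^ q ∂μ
      ≤ (∫⁻ x, F x ^ (p / (p - q)) ∂μ) ^ (1 / (p / (p - q))) *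
        (∫⁻ x, (V x ^ q) ^ (p / q) ∂μ) ^ (1 / (p / q)) := h
    _ = (∫⁻ x, F x ^ (p / (p - q)) ∂μ) ^ ((p - q) / p) * (∫⁻ x, V x ^ p ∂μ) ^ (q / p) := by
        rw [one_div_div, one_div_div]
        congr 2
        refine lintegral_congr fun x => ?_
        rw [← ENNReal.rpow_mul]
        congr 1
        field_simp

lemma my_local_rpow_bound {α : Type*} [MeasurableSpace α] (μ : Measure α) {p r : ℝ}
    (hr : 0 < r) (hrp : r < p) {V : α → ℝ≥0∞} (hV : Measurable V) :
    ∫⁻ x, V x ^ r ∂μ ≤ (∫⁻ x, V x ^ p ∂μ) ^ (r / p) * (μ univ) ^ (1 - r / p) := by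
  have hp0 : 0 < p := lt_trans hr hrp
  have hrp1 : r / p < 1 := (div_lt_one hp0).2 hrp
  have conj : Real.HolderConjugate (p / r) (1 - r / p)⁻¹ := by
    rw [Real.holderConjugate_iff]; constructor
    · rw [lt_div_iff₀ hr]; linarith
    · rw [inv_div, inv_inv]; field_simp; ring
  have h := ENNReal.lintegral_mul_le_Lp_mul_Lq μ conj
    ((ENNReal.continuous_rpow_const.measurable.comp hV).aemeasurable (μ := μ) (f := fun x => V x ^ r))
    (aemeasurable_const (b := (1:ℝ≥0∞)))
  simp only [Pi.mul_apply, mul_one, ENNReal.one_rpow, lintegral_const, one_mul] at h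
  calc ∫⁻ x, V x ^ r ∂μ
      ≤ (∫⁻ x, (V x ^ r) ^ (p / r) ∂μ) ^ (1 / (p / r)) *
        (μ univ) ^ (1 / (1 - r / p)⁻¹) := h
    _ = (∫⁻ x, V x ^ p ∂μ) ^ (r / p) * (μ univ) ^ (1 - r / p) := by
        rw [one_div_div, one_div, inv_inv]
        congr 2
        refine lintegral_congr fun x => ?_
        rw [← ENNReal.rpow_mul]
        congr 1
        field_simp

/-- Claim (2.16) in the proof of Lemma 2.10 of the paper: if `f` is bounded, measurable and
`∫ |f|^{q*} < ∞` with `q* = p/(p-q)`, the sequence `(u_n)` is bounded in `L^p`, `u ∈ L^p`, and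
`u_n → u` in `L²` of every ball, then `∫ f |u_n|^q → ∫ f |u|^q`. -/
theorem weighted_q_integral_convergence (N : ℕ) (hN : 1 ≤ N) (p q : ℝ)
    (hp : 2 < p) (hq1 : 1 < q) (hq2 : q < 2)
    (f : EuclideanSpace ℝ (Fin N) → ℝ) (hfm : Measurable f)
    (M : ℝ) (hfb : ∀ x, |f x| ≤ M)
    (hfq : (∫⁻ x, ENNReal.ofReal (|f x| ^ (p / (p - q)))) < ⊤)
    (u : ℕ → EuclideanSpace ℝ (Fin N) → ℝ) (hum : ∀ n, Measurable (u n))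
    (u₀ : EuclideanSpace ℝ (Fin N) → ℝ) (hu₀m : Measurable u₀)
    (hub : (⨆ n, eLpNorm (u n) (ENNReal.ofReal p) volume) < ⊤)
    (hu₀ : eLpNorm u₀ (ENNReal.ofReal p) volume < ⊤)
    (hconv : ∀ R : ℝ, 0 < R →
      Tendsto (fun n => ∫⁻ x in Metric.ball (0 : EuclideanSpace ℝ (Fin N)) R,
        ENNReal.ofReal ((u n x - u₀ x) ^ 2)) atTop (nhds 0)) :
    Tendsto (fun n => ∫ x, f x * |u n x| ^ q) atTop (nhds (∫ x, f x * |u₀ x| ^ q)) := by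
  have hq0 : (0:ℝ) < q := by linarith
  have hp0 : (0:ℝ) < p := by linarith
  have hpq : (0:ℝ) < p - q := by linarith
  set F : EuclideanSpace ℝ (Fin N) → ℝ≥0∞ := fun x => ENNReal.ofReal |f x| with hF
  have hFmeas : Measurable F := ENNReal.measurable_ofReal.comp hfm.abs
  set V : (EuclideanSpace ℝ (Fin N) → ℝ) → EuclideanSpace ℝ (Fin N) → ℝ≥0∞ := fun v x => ENNReal.ofReal |v x| with hV
  have hVmeas : ∀ v : EuclideanSpace ℝ (Fin N) → ℝ, Measurable v → Measurable (V v) := fun v hv =>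
    ENNReal.measurable_ofReal.comp hv.abs
  -- rewrite eLpNorm bounds as lintegral bounds
  have hIp : ∀ v : EuclideanSpace ℝ (Fin N) → ℝ, (∫⁻ x, V v x ^ p) = (eLpNorm v (ENNReal.ofReal p) volume) ^ p := by
    intro v
    rw [eLpNorm_eq_lintegral_rpow_enorm_toReal (by simp [ENNReal.ofReal_eq_zero]; linarith)
      ENNReal.ofReal_ne_top, ENNReal.toReal_ofReal hp0.le, one_div,
      ENNReal.rpow_inv_rpow hp0.ne']
    refine lintegral_congr fun x => ?_
    congr 1
    show ENNReal.ofReal |v x| = ‖v x‖ₑ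
    rw [← Real.norm_eq_abs, ofReal_norm]
  set Cp : ℝ≥0∞ := (⨆ n, eLpNorm (u n) (ENNReal.ofReal p) volume) ^ p ⊔
      (eLpNorm u₀ (ENNReal.ofReal p) volume) ^ p with hCp
  have hCptop : Cp < ⊤ := by
    rw [hCp, sup_lt_iff]
    exact ⟨ENNReal.rpow_lt_top_of_nonneg hp0.le hub.ne,
      ENNReal.rpow_lt_top_of_nonneg hp0.le hu₀.ne⟩
  have hCpn : ∀ n, (∫⁻ x, V (u n) x ^ p) ≤ Cp := by
    intro n
    rw [hIp]
    exact le_sup_of_le_left (ENNReal.rpow_le_rpow (le_iSup (fun n => eLpNorm (u n) (ENNReal.ofReal p) volume) n) hp0.le)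
  have hCp0 : (∫⁻ x, V u₀ x ^ p) ≤ Cp := by rw [hIp]; exact le_sup_right
  -- the weight integral
  have hFq : (∫⁻ x, F x ^ (p / (p - q))) < ⊤ := by
    refine lt_of_eq_of_lt ?_ hfq
    refine lintegral_congr fun x => ?_
    rw [hF, ENNReal.ofReal_rpow_of_nonneg (abs_nonneg _) (by positivity)]
  -- integrability of the integrands
  have hint : ∀ v : EuclideanSpace ℝ (Fin N) → ℝ, Measurable v → (∫⁻ x, V v x ^ p) ≤ Cp →
      Integrable (fun x => f x * |v x| ^ q) := by
    intro v hv hvp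
    constructor
    · exact (hfm.mul ((Real.continuous_rpow_const hq0.le).measurable.comp
        hv.abs)).aestronglyMeasurable
    · rw [hasFiniteIntegral_iff_norm]
      have : ∀ x : EuclideanSpace ℝ (Fin N), ENNReal.ofReal ‖f x * |v x| ^ q‖ = F x * V v x ^ q := by
        intro x
        rw [Real.norm_eq_abs, abs_mul, abs_of_nonneg (Real.rpow_nonneg (abs_nonneg _) _),
          ENNReal.ofReal_mul (abs_nonneg _), hF, hV,
          ENNReal.ofReal_rpow_of_nonneg (abs_nonneg _) hq0.le]
      simp_rw [this]
      calc (∫⁻ x, F x * V v x ^ q) ≤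
          (∫⁻ x, F x ^ (p / (p - q))) ^ ((p - q) / p) * (∫⁻ x, V v x ^ p) ^ (q / p) :=
            my_weighted_holder volume hp hq1 hq2 hFmeas (hVmeas v hv)
        _ < ⊤ := ENNReal.mul_lt_top
            (ENNReal.rpow_lt_top_of_nonneg (by positivity) hFq.ne)
            (ENNReal.rpow_lt_top_of_nonneg (by positivity)
              (lt_of_le_of_lt hvp hCptop).ne)
  set D : ℕ → EuclideanSpace ℝ (Fin N) → ℝ≥0∞ :=
    fun n x => ENNReal.ofReal |(|u n x|) ^ q - (|u₀ x|) ^ q| with hD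
  have hrpowMeas : ∀ v : EuclideanSpace ℝ (Fin N) → ℝ, Measurable v →
      Measurable (fun x => |v x| ^ q) := fun v hv =>
    (Real.continuous_rpow_const hq0.le).measurable.comp hv.abs
  have hDmeas : ∀ n, Measurable (D n) := fun n =>
    ENNReal.measurable_ofReal.comp (((hrpowMeas _ (hum n)).sub (hrpowMeas _ hu₀m)).abs)
  suffices key : Tendsto (fun n => ∫⁻ x, F x * D n x) atTop (𝓝 0) by
    rw [tendsto_iff_dist_tendsto_zero]
    have hb : ∀ n, dist (∫ x, f x * |u n x| ^ q) (∫ x, f x * |u₀ x| ^ q) ≤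
        (∫⁻ x, F x * D n x).toReal := by
      intro n
      rw [Real.dist_eq, ← integral_sub (hint _ (hum n) (hCpn n)) (hint _ hu₀m hCp0)]
      have h1 := norm_integral_le_lintegral_norm (μ := volume)
        (fun x => f x * |u n x| ^ q - f x * |u₀ x| ^ q)
      rw [Real.norm_eq_abs] at h1
      refine le_trans h1 (le_of_eq ?_)
      congr 1
      refine lintegral_congr fun x => ?_
      rw [Real.norm_eq_abs, ← mul_sub, abs_mul, ENNReal.ofReal_mul (abs_nonneg _)]
    refine squeeze_zero (fun n => dist_nonneg) hb ?_
    have h2 := (ENNReal.tendsto_toReal (a := 0) (by simp)).comp key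
    simpa [Function.comp_def] using h2
  rw [ENNReal.tendsto_nhds_zero]
  intro ε hε
  set qs := p / (p - q) with hqs
  set Csum : ℝ≥0∞ := Cp ^ (q / p) + Cp ^ (q / p) with hCsum
  have hCsumtop : Csum ≠ ⊤ := by
    rw [hCsum]
    exact ENNReal.add_ne_top.2 ⟨(ENNReal.rpow_lt_top_of_nonneg (by positivity) hCptop.ne).ne,
      (ENNReal.rpow_lt_top_of_nonneg (by positivity) hCptop.ne).ne⟩
  -- choice of the radius
  have hTail : Tendsto (fun k : ℕ =>
      (∫⁻ x in (Metric.ball (0 : EuclideanSpace ℝ (Fin N)) (k : ℝ))ᶜ, F x ^ qs) ^ ((p - q) / p)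
        * Csum) atTop (𝓝 0) := by
    have hGm : Measurable fun x : EuclideanSpace ℝ (Fin N) => F x ^ qs :=
      ENNReal.continuous_rpow_const.measurable.comp hFmeas
    have h0 : Tendsto (fun k : ℕ =>
        (volume.withDensity (fun x => F x ^ qs))
          ((Metric.ball (0 : EuclideanSpace ℝ (Fin N)) (k : ℝ))ᶜ)) atTop (𝓝 0) := by
      have hνtop : (volume.withDensity (fun x => F x ^ qs)) univ ≠ ⊤ := by
        rw [withDensity_apply _ MeasurableSet.univ, Measure.restrict_univ]
        exact hFq.ne
      have h := tendsto_measure_iInter_atTop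
        (μ := volume.withDensity (fun x => F x ^ qs))
        (s := fun k : ℕ => (Metric.ball (0 : EuclideanSpace ℝ (Fin N)) (k : ℝ))ᶜ)
        (fun k => measurableSet_ball.compl.nullMeasurableSet)
        (fun i j hij => compl_subset_compl.2 (Metric.ball_subset_ball (by exact_mod_cast hij)))
        ⟨0, ne_top_of_le_ne_top hνtop (measure_mono (subset_univ _))⟩
      have hiInter : (⋂ k : ℕ, (Metric.ball (0 : EuclideanSpace ℝ (Fin N)) (k : ℝ))ᶜ) = ∅ := by
        ext x
        simp only [mem_iInter, mem_compl_iff, Metric.mem_ball, not_lt, mem_empty_iff_false,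
          iff_false, not_forall, not_le]
        obtain ⟨k, hk⟩ := exists_nat_gt (dist x 0)
        exact ⟨k, hk⟩
      rw [hiInter, measure_empty] at h
      exact h
    have h1 : Tendsto (fun k : ℕ =>
        (∫⁻ x in (Metric.ball (0 : EuclideanSpace ℝ (Fin N)) (k : ℝ))ᶜ, F x ^ qs)
          ^ ((p - q) / p)) atTop (𝓝 0) := by
      have h2 := ((ENNReal.continuous_rpow_const (y := (p - q) / p)).continuousAt
        (x := (0:ℝ≥0∞))).tendsto.comp h0
      rw [ENNReal.zero_rpow_of_pos (by positivity)] at h2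
      refine h2.congr fun k => ?_
      simp only [Function.comp_apply]
      rw [withDensity_apply _ measurableSet_ball.compl]
    have h3 := ENNReal.Tendsto.mul_const h1 (Or.inr hCsumtop)
    rw [zero_mul] at h3
    exact h3
  obtain ⟨k, hktail, hk1⟩ := ((hTail.eventually_lt_const (ENNReal.half_pos hε.ne')).and
    (eventually_ge_atTop 1)).exists
  have hkR : (0:ℝ) < (k:ℝ) := by exact_mod_cast Nat.lt_of_lt_of_le Nat.zero_lt_one hk1
  set B := Metric.ball (0 : EuclideanSpace ℝ (Fin N)) ((k:ℕ):ℝ) with hBdef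
  -- tail estimate, valid for every n
  have htail_est : ∀ n, (∫⁻ x in Bᶜ, F x * D n x) ≤ ε / 2 := by
    intro n
    have hh : ∀ v : EuclideanSpace ℝ (Fin N) → ℝ, Measurable v → (∫⁻ x, V v x ^ p) ≤ Cp →
        (∫⁻ x in Bᶜ, F x * V v x ^ q) ≤ (∫⁻ x in Bᶜ, F x ^ qs) ^ ((p - q) / p) * Cp ^ (q / p) :=
      fun v hv hvp =>
        (my_weighted_holder (volume.restrict Bᶜ) hp hq1 hq2 hFmeas (hVmeas v hv)).trans
          (mul_le_mul' le_rfl (ENNReal.rpow_le_rpow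
            ((setLIntegral_le_lintegral _ _).trans hvp) (by positivity)))
    calc (∫⁻ x in Bᶜ, F x * D n x)
        ≤ ∫⁻ x in Bᶜ, (F x * V (u n) x ^ q + F x * V u₀ x ^ q) := by
          refine lintegral_mono fun x => ?_
          rw [← mul_add]
          refine mul_le_mul_right ?_ _
          calc D n x ≤ ENNReal.ofReal ((|u n x|) ^ q + (|u₀ x|) ^ q) := by
                refine ENNReal.ofReal_le_ofReal ((abs_sub _ _).trans (le_of_eq ?_))
                rw [abs_of_nonneg (Real.rpow_nonneg (abs_nonneg _) _),
                  abs_of_nonneg (Real.rpow_nonneg (abs_nonneg _) _)]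
            _ = V (u n) x ^ q + V u₀ x ^ q := by
                rw [ENNReal.ofReal_add (by positivity) (by positivity),
                  ENNReal.ofReal_rpow_of_nonneg (abs_nonneg _) hq0.le,
                  ENNReal.ofReal_rpow_of_nonneg (abs_nonneg _) hq0.le]
      _ = (∫⁻ x in Bᶜ, F x * V (u n) x ^ q) + ∫⁻ x in Bᶜ, F x * V u₀ x ^ q :=
          lintegral_add_left (hFmeas.mul
            (ENNReal.continuous_rpow_const.measurable.comp (hVmeas _ (hum n)))) _
      _ ≤ (∫⁻ x in Bᶜ, F x ^ qs) ^ ((p - q) / p) * Cp ^ (q / p) +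
            (∫⁻ x in Bᶜ, F x ^ qs) ^ ((p - q) / p) * Cp ^ (q / p) :=
          add_le_add (hh _ (hum n) (hCpn n)) (hh _ hu₀m hCp0)
      _ = (∫⁻ x in Bᶜ, F x ^ qs) ^ ((p - q) / p) * Csum := by rw [hCsum, mul_add]
      _ ≤ ε / 2 := hktail.le
  -- ball estimate
  have hball : ∀ᶠ n in atTop, (∫⁻ x in B, F x * D n x) ≤ ε / 2 := by
    have hconv' := hconv ((k:ℕ):ℝ) hkR
    set r : ℝ := (q - 1) * 2 with hrdef
    have hr0 : 0 < r := by rw [hrdef]; nlinarith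
    have hrp : r < p := by rw [hrdef]; nlinarith
    have hrp' : 0 ≤ 1 - r / p := sub_nonneg.2 ((div_le_one hp0).2 hrp.le)
    set KB : ℝ≥0∞ := Cp ^ (r / p) * (volume B) ^ (1 - r / p) with hKB
    have hKBtop : KB ≠ ⊤ := by
      rw [hKB]
      exact (ENNReal.mul_lt_top
        (ENNReal.rpow_lt_top_of_nonneg (by positivity) hCptop.ne)
        (ENNReal.rpow_lt_top_of_nonneg hrp' measure_ball_lt_top.ne)).ne
    have hVloc : ∀ v : EuclideanSpace ℝ (Fin N) → ℝ, Measurable v →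
        (∫⁻ x, V v x ^ p) ≤ Cp → (∫⁻ x in B, (V v x ^ (q - 1)) ^ (2:ℝ)) ≤ KB := by
      intro v hv hvp
      have e1 : ∀ x, (V v x ^ (q - 1)) ^ (2:ℝ) = V v x ^ r := fun x => by
        rw [hrdef, ENNReal.rpow_mul]
      simp_rw [e1]
      calc (∫⁻ x in B, V v x ^ r)
          ≤ (∫⁻ x in B, V v x ^ p) ^ (r / p) * ((volume.restrict B) univ) ^ (1 - r / p) :=
            my_local_rpow_bound (volume.restrict B) hr0 hrp (hVmeas v hv)
        _ ≤ KB := by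
            rw [Measure.restrict_apply_univ, hKB]
            exact mul_le_mul_left (ENNReal.rpow_le_rpow
              ((setLIntegral_le_lintegral _ _).trans hvp) (by positivity)) _
    set W : ℕ → EuclideanSpace ℝ (Fin N) → ℝ≥0∞ :=
      fun n x => ENNReal.ofReal |u n x - u₀ x| with hW
    have hWmeas : ∀ n, Measurable (W n) := fun n =>
      ENNReal.measurable_ofReal.comp ((hum n).sub hu₀m).abs
    have hWE : ∀ n, (∫⁻ x in B, W n x ^ (2:ℝ)) =
        ∫⁻ x in B, ENNReal.ofReal ((u n x - u₀ x) ^ 2) := by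
      intro n
      refine lintegral_congr fun x => ?_
      show (ENNReal.ofReal |u n x - u₀ x|) ^ (2:ℝ) = _
      rw [ENNReal.ofReal_rpow_of_nonneg (abs_nonneg _) (by norm_num : (0:ℝ) ≤ 2)]
      congr 1
      rw [show (2:ℝ) = ((2:ℕ):ℝ) by norm_num, Real.rpow_natCast, sq_abs]
    set c : ℝ≥0∞ := ENNReal.ofReal M * (ENNReal.ofReal q * (2 * KB ^ (1/2:ℝ))) with hc
    have hctop : c ≠ ⊤ := by
      rw [hc]
      refine ENNReal.mul_ne_top ENNReal.ofReal_ne_top (ENNReal.mul_ne_top ENNReal.ofReal_ne_top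
        (ENNReal.mul_ne_top (by norm_num)
          (ENNReal.rpow_lt_top_of_nonneg (by norm_num) hKBtop).ne))
    have conj22 : Real.HolderConjugate 2 2 := Real.holderConjugate_iff.2 ⟨one_lt_two, by norm_num⟩
    have hCS : ∀ n, ∀ v : EuclideanSpace ℝ (Fin N) → ℝ, Measurable v →
        (∫⁻ x, V v x ^ p) ≤ Cp →
        (∫⁻ x in B, (V v x ^ (q - 1)) * W n x) ≤
          KB ^ (1/2:ℝ) * (∫⁻ x in B, ENNReal.ofReal ((u n x - u₀ x) ^ 2)) ^ (1/2:ℝ) := by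
      intro n v hv hvp
      have hAm : Measurable fun x => V v x ^ (q - 1) :=
        ENNReal.continuous_rpow_const.measurable.comp (hVmeas v hv)
      have h := ENNReal.lintegral_mul_le_Lp_mul_Lq (volume.restrict B) conj22
        hAm.aemeasurable (hWmeas n).aemeasurable
      simp only [Pi.mul_apply] at h
      calc (∫⁻ x in B, (V v x ^ (q - 1)) * W n x)
          ≤ (∫⁻ x in B, (V v x ^ (q - 1)) ^ (2:ℝ)) ^ (1/(2:ℝ)) *
            (∫⁻ x in B, W n x ^ (2:ℝ)) ^ (1/(2:ℝ)) := h
        _ ≤ KB ^ (1/2:ℝ) * (∫⁻ x in B, ENNReal.ofReal ((u n x - u₀ x) ^ 2)) ^ (1/2:ℝ) := by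
            rw [hWE n]
            exact mul_le_mul_left (ENNReal.rpow_le_rpow (hVloc v hv hvp) (by norm_num)) _
    have hcore : ∀ n, (∫⁻ x in B, F x * D n x) ≤
        c * (∫⁻ x in B, ENNReal.ofReal ((u n x - u₀ x) ^ 2)) ^ (1/2:ℝ) := by
      intro n
      have hA1 : Measurable fun x => (V (u n) x ^ (q - 1)) * W n x :=
        (ENNReal.continuous_rpow_const.measurable.comp (hVmeas _ (hum n))).mul (hWmeas n)
      have hA2 : Measurable fun x => (V u₀ x ^ (q - 1)) * W n x :=
        (ENNReal.continuous_rpow_const.measurable.comp (hVmeas _ hu₀m)).mul (hWmeas n)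
      have hpt : ∀ x, F x * D n x ≤ ENNReal.ofReal M *
          (ENNReal.ofReal q * ((V (u n) x ^ (q - 1)) * W n x + (V u₀ x ^ (q - 1)) * W n x)) := by
        intro x
        refine mul_le_mul' (ENNReal.ofReal_le_ofReal (hfb x)) ?_
        calc D n x
            ≤ ENNReal.ofReal (q * ((|u n x| ^ (q - 1) + |u₀ x| ^ (q - 1)) * |u n x - u₀ x|)) :=
              ENNReal.ofReal_le_ofReal (my_abs_rpow_sub_abs_rpow hq1.le _ _)
          _ = _ := by
              rw [ENNReal.ofReal_mul hq0.le, ENNReal.ofReal_mul (by positivity),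
                ENNReal.ofReal_add (by positivity) (by positivity),
                ENNReal.ofReal_rpow_of_nonneg (abs_nonneg _) (by linarith),
                ENNReal.ofReal_rpow_of_nonneg (abs_nonneg _) (by linarith), add_mul]
      calc (∫⁻ x in B, F x * D n x)
          ≤ ∫⁻ x in B, ENNReal.ofReal M * (ENNReal.ofReal q *
              ((V (u n) x ^ (q - 1)) * W n x + (V u₀ x ^ (q - 1)) * W n x)) :=
            lintegral_mono hpt
        _ = ENNReal.ofReal M * (ENNReal.ofReal q *
              ((∫⁻ x in B, (V (u n) x ^ (q - 1)) * W n x) +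
                ∫⁻ x in B, (V u₀ x ^ (q - 1)) * W n x)) := by
            rw [lintegral_const_mul _ (f := fun x => ENNReal.ofReal q * ((V (u n) x ^ (q - 1)) * W n x + (V u₀ x ^ (q - 1)) * W n x)) ((hA1.add hA2).const_mul _),
              lintegral_const_mul _ (f := fun x => (V (u n) x ^ (q - 1)) * W n x + (V u₀ x ^ (q - 1)) * W n x) (hA1.add hA2), lintegral_add_left hA1]
        _ ≤ ENNReal.ofReal M * (ENNReal.ofReal q *
              (KB ^ (1/2:ℝ) * (∫⁻ x in B, ENNReal.ofReal ((u n x - u₀ x) ^ 2)) ^ (1/2:ℝ) +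
               KB ^ (1/2:ℝ) * (∫⁻ x in B, ENNReal.ofReal ((u n x - u₀ x) ^ 2)) ^ (1/2:ℝ))) :=
            mul_le_mul_right (mul_le_mul_right
              (add_le_add (hCS n _ (hum n) (hCpn n)) (hCS n _ hu₀m hCp0)) _) _
        _ = c * (∫⁻ x in B, ENNReal.ofReal ((u n x - u₀ x) ^ 2)) ^ (1/2:ℝ) := by
            rw [hc]; ring
    have h2 : Tendsto (fun n =>
        c * (∫⁻ x in B, ENNReal.ofReal ((u n x - u₀ x) ^ 2)) ^ (1/2:ℝ)) atTop (𝓝 0) := by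
      have h3 := ((ENNReal.continuous_rpow_const (y := (1/2:ℝ))).continuousAt
        (x := (0:ℝ≥0∞))).tendsto.comp hconv'
      rw [ENNReal.zero_rpow_of_pos (by norm_num)] at h3
      have h4 := ENNReal.Tendsto.const_mul h3 (Or.inr hctop)
      rw [mul_zero] at h4
      exact h4
    filter_upwards [h2.eventually_lt_const (ENNReal.half_pos hε.ne')] with n hn
    exact (hcore n).trans hn.le
  filter_upwards [hball] with n hn
  calc (∫⁻ x, F x * D n x)
      = (∫⁻ x in B, F x * D n x) + ∫⁻ x in Bᶜ, F x * D n x :=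
        (lintegral_add_compl _ measurableSet_ball).symm
    _ ≤ ε / 2 + ε / 2 := add_le_add hn (htail_est n)
    _ = ε := ENNReal.add_halves ε
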